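/- Let M be an MSC with processes p and q, p ≠ q, and a a label. Suppose for every event e on process p with γ(e)=0 there is no event f with label (q,a) parallel to e. Then there exists a path in the directed graph (E, →proc ∪ →msg) that passes through all events e on process p with γ(e)=0 and through all events labeled (q,a). -/

import Mathlib

/-- A message sequence chart (MSC) over processes `P`, labels `A`, and event set `E`. -/
structure MSC (P A E : Type) [Fintype E] where
  proc : E → P
  lbl : E → A
  pnext : E → E → Prop
  msg : E → E → Prop
  pnext_proc : ∀ {e f}, pnext e f → proc e = proc f
  pnext_succ_unique : ∀ {e f f'}, pnext e f → pnext e f' → f = f'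
  pnext_pred_unique : ∀ {e e' f}, pnext e f → pnext e' f → e = e'
  msg_proc : ∀ {e f}, msg e f → proc e ≠ proc f
  msg_send_unique : ∀ {e f f'}, msg e f → msg e f' → f = f'
  msg_recv_unique : ∀ {e e' f}, msg e f → msg e' f → e = e'
  msg_not_send_recv : ∀ {e f g}, msg e f → ¬ msg g e
  acyclic : ∀ e, ¬ Relation.TransGen (fun a b => pnext a b ∨ msg a b) e e
  proc_total : ∀ {e f}, proc e = proc f →
    Relation.ReflTransGen pnext e f ∨ Relation.ReflTransGen pnext f e
  fifo : ∀ {e e' f f'}, msg e f → msg e' f' → proc e = proc e' → proc f = proc f' →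
    (Relation.ReflTransGen pnext e e' ↔ Relation.ReflTransGen pnext f f')

namespace MSC

variable {P A E : Type} [Fintype E]

/-- The edge relation `→proc ∪ →msg`. -/
def edge (M : MSC P A E) (e f : E) : Prop := M.pnext e f ∨ M.msg e f

/-- The partial order `≤ = (→proc ∪ →msg)*`. -/
def le (M : MSC P A E) (e f : E) : Prop := Relation.ReflTransGen M.edge e f

/-- The strict order `< = (→proc ∪ →msg)⁺`. -/
def lt (M : MSC P A E) (e f : E) : Prop := Relation.TransGen M.edge e f

/-- `e ∥ f`: incomparability w.r.t. `≤`. -/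
def par (M : MSC P A E) (e f : E) : Prop := ¬ M.le e f ∧ ¬ M.le f e

/-- `e ⋖ f`: strict order minus the direct process/message edges. -/
def cless (M : MSC P A E) (e f : E) : Prop := M.lt e f ∧ ¬ M.pnext e f ∧ ¬ M.msg e f

/-- The (reflexive) order along a single process: `→proc*`. -/
def pord (M : MSC P A E) (e f : E) : Prop := Relation.ReflTransGen M.pnext e f

/-- `Past_p(f) = {g ∈ E_p : g < f}`. -/
def PastP (M : MSC P A E) (p : P) (f : E) : Set E := {g | M.proc g = p ∧ M.lt g f}

/-- `Fut_p(f) = {g ∈ E_p : f < g}`. -/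
def FutP (M : MSC P A E) (p : P) (f : E) : Set E := {g | M.proc g = p ∧ M.lt f g}

/-- `Par_p(f) = {g ∈ E_p : g ∥ f}`. -/
def ParP (M : MSC P A E) (p : P) (f : E) : Set E := {g | M.proc g = p ∧ M.par g f}

/-- `S` is an interval of consecutive events on process `p`. -/
def IsInterval (M : MSC P A E) (p : P) (S : Set E) : Prop :=
  (∀ e ∈ S, M.proc e = p) ∧
  ∀ e f g, e ∈ S → g ∈ S → M.pord e f → M.pord f g → f ∈ S

/-- The interval `[e,e'] = {g ∈ E_p : e ≤ g ≤ e'}` on process `p`. -/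
def Intv (M : MSC P A E) (p : P) (e e' : E) : Set E :=
  {g | M.proc g = p ∧ M.pord e g ∧ M.pord g e'}

end MSC

section Aux

variable {P A E : Type} [Fintype E] {M : MSC P A E}

lemma mscLe_trans {e f g : E} (h1 : M.le e f) (h2 : M.le f g) : M.le e g :=
  Relation.ReflTransGen.trans h1 h2

lemma pord_le {e f : E} (h : M.pord e f) : M.le e f :=
  Relation.ReflTransGen.mono (p := M.edge) (fun _ _ hx => Or.inl hx) e f h

lemma path_of_le {e f : E} (hle : M.le e f) :
    ∃ l : List E, l.Chain' M.edge ∧ l.head? = some e ∧ l.getLast? = some f := by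
  induction hle using Relation.ReflTransGen.head_induction_on with
  | refl => exact ⟨[f], List.isChain_singleton _, rfl, rfl⟩
  | head hedge _ ih =>
    obtain ⟨l, hc, hh, hl⟩ := ih
    match l, hh with
    | x :: t, hh =>
      obtain rfl : x = _ := by simpa using hh
      exact ⟨_ :: x :: t, List.isChain_cons_cons.2 ⟨hedge, hc⟩, rfl, by simpa using hl⟩

lemma exists_min (S : Finset E) (hne : S.Nonempty)
    (tot : ∀ e ∈ S, ∀ f ∈ S, M.le e f ∨ M.le f e) :
    ∃ m ∈ S, ∀ e ∈ S, M.le m e := by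
  classical
  induction S using Finset.strongInduction with
  | _ S ih =>
    obtain ⟨x, hx⟩ := hne
    by_cases hS : (S.erase x).Nonempty
    · obtain ⟨m, hm, hmin⟩ := ih (S.erase x) (Finset.erase_ssubset hx) hS
        (fun e he f hf => tot e (Finset.mem_of_mem_erase he) f (Finset.mem_of_mem_erase hf))
      rcases tot x hx m (Finset.mem_of_mem_erase hm) with hxm | hmx
      · refine ⟨x, hx, fun e he => ?_⟩
        by_cases hex : e = x
        · rw [hex]; exact Relation.ReflTransGen.refl
        · exact mscLe_trans hxm (hmin e (Finset.mem_erase.2 ⟨hex, he⟩))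
      · refine ⟨m, Finset.mem_of_mem_erase hm, fun e he => ?_⟩
        by_cases hex : e = x
        · rw [hex]; exact hmx
        · exact hmin e (Finset.mem_erase.2 ⟨hex, he⟩)
    · refine ⟨x, hx, fun e he => ?_⟩
      have hex : e = x := by
        by_contra hex
        exact hS ⟨e, Finset.mem_erase.2 ⟨hex, he⟩⟩
      rw [hex]; exact Relation.ReflTransGen.refl

lemma build (S : Finset E)
    (tot : ∀ e ∈ S, ∀ f ∈ S, M.le e f ∨ M.le f e) :
    ∃ l : List E, l.Chain' M.edge ∧ (∀ e ∈ S, e ∈ l) ∧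
      (S.Nonempty → ∃ m ∈ S, l.head? = some m ∧ ∀ e ∈ S, M.le m e) := by
  classical
  induction S using Finset.strongInduction with
  | _ S ih =>
    by_cases hne : S.Nonempty
    · obtain ⟨m, hm, hmin⟩ := exists_min S hne tot
      set S' := S.erase m with hS'
      have tot' : ∀ e ∈ S', ∀ f ∈ S', M.le e f ∨ M.le f e :=
        fun e he f hf => tot e (Finset.mem_of_mem_erase he) f (Finset.mem_of_mem_erase hf)
      by_cases hne' : S'.Nonempty
      · obtain ⟨l', hc', hcov', hhead'⟩ := ih S' (Finset.erase_ssubset hm) tot'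
        obtain ⟨m', hm', hh', hmin'⟩ := hhead' hne'
        obtain ⟨l0, hc0, hh0, hl0⟩ := path_of_le (M := M)
          (hmin m' (Finset.mem_of_mem_erase hm'))
        match l', hh' with
        | y :: t', hh' =>
          obtain rfl : y = m' := by simpa using hh'
          match l0, hh0 with
          | x :: t0, hh0 =>
            obtain rfl : x = m := by simpa using hh0
            refine ⟨(x :: t0) ++ t', ?_, ?_, fun _ => ⟨x, hm, rfl, hmin⟩⟩
            · refine List.IsChain.append hc0 (List.isChain_cons.1 hc').2 ?_
              intro z hz w hw
              have hz' : z = y := by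
                rw [Option.mem_def, hl0] at hz
                exact (Option.some.inj hz).symm
              rw [hz']
              exact (List.isChain_cons.1 hc').1 w hw
            · intro e he
              by_cases hem : e = x
              · rw [hem]
                exact List.mem_append.2 (Or.inl List.mem_cons_self)
              · have he' : e ∈ S' := Finset.mem_erase.2 ⟨hem, he⟩
                rcases List.mem_cons.1 (hcov' e he') with h1 | h1
                · refine List.mem_append.2 (Or.inl ?_)
                  obtain ⟨hne0, heq⟩ := List.mem_getLast?_eq_getLast
                    (l := x :: t0) (x := y) (Option.mem_def.2 hl0)
                  rw [h1, heq]
                  exact List.getLast_mem hne0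
                · exact List.mem_append.2 (Or.inr h1)
      · -- S = {m}
        refine ⟨[m], List.isChain_singleton _, fun e he => ?_, fun _ => ⟨m, hm, rfl, hmin⟩⟩
        have : e = m := by
          by_contra hex
          exact hne' ⟨e, Finset.mem_erase.2 ⟨hex, he⟩⟩
        simp [this]
    · exact ⟨[], List.isChain_nil, fun e he => absurd ⟨e, he⟩ hne,
        fun hn => absurd hn hne⟩

end Aux

/-- if no `0`-marked event on process `p` is parallel to any event
labeled `(q,a)`, then there is a path through all these events. -/
theorem stmt2 {P A E : Type} [Fintype E] (M : MSC P A E) (p q : P) (hpq : p ≠ q)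
    (a : A) (γ : E → Bool)
    (h : ∀ e, M.proc e = p → γ e = false →
      ∀ f, M.proc f = q → M.lbl f = a → ¬ M.par e f) :
    ∃ l : List E, l.Chain' M.edge ∧
      (∀ e, M.proc e = p → γ e = false → e ∈ l) ∧
      (∀ f, M.proc f = q → M.lbl f = a → f ∈ l) := by
  classical
  set S : Finset E := Finset.univ.filter
    (fun e => (M.proc e = p ∧ γ e = false) ∨ (M.proc e = q ∧ M.lbl e = a)) with hS
  have hmemS : ∀ e, e ∈ S ↔ ((M.proc e = p ∧ γ e = false) ∨ (M.proc e = q ∧ M.lbl e = a)) := by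
    intro e; simp [hS]
  have tot : ∀ e ∈ S, ∀ f ∈ S, M.le e f ∨ M.le f e := by
    intro e he f hf
    rcases (hmemS e).1 he with ⟨hep, heg⟩ | ⟨heq, hea⟩ <;>
      rcases (hmemS f).1 hf with ⟨hfp, hfg⟩ | ⟨hfq, hfa⟩
    · rcases M.proc_total (hep.trans hfp.symm) with h1 | h1
      · exact Or.inl (pord_le h1)
      · exact Or.inr (pord_le h1)
    · have := h e hep heg f hfq hfa
      rw [MSC.par] at this
      tauto
    · have := h f hfp hfg e heq hea
      rw [MSC.par] at this
      tauto
    · rcases M.proc_total (heq.trans hfq.symm) with h1 | h1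
      · exact Or.inl (pord_le h1)
      · exact Or.inr (pord_le h1)
  obtain ⟨l, hc, hcov, -⟩ := build S tot
  exact ⟨l, hc, fun e he hg => hcov e ((hmemS e).2 (Or.inl ⟨he, hg⟩)),
    fun f hf ha => hcov f ((hmemS f).2 (Or.inr ⟨hf, ha⟩))⟩
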